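/- Let a : X' → A be the algebraic reduction of a compact connected complex manifold (so a is a surjective holomorphic map with connected fibers to a projective manifold A inducing an isomorphism of meromorphic function fields M(X') ≅ M(A)). Let N be a non-polar irreducible divisor on X' (not contained in the polar set of any meromorphic function on X') and S a divisor on X' with no common irreducible component with N. Then for every p ≥ 0, multiplication by the canonical section of pN induces an isomorphism H⁰(X', S) ≅ H⁰(X', S + pN). -/
import Mathlib

theorem nonpolar_twist_iso {K : Type*} [Field K] {ι : Type*}
    (div : Kˣ → (ι →₀ ℤ))
    (hdiv : ∀ f g : Kˣ, div (f * g) = div f + div g)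
    (N : ι) (hN : ∀ f : Kˣ, 0 ≤ div f N)
    (S : ι →₀ ℤ) (hSN : S N = 0) :
    ∀ p : ℕ, {f : Kˣ | 0 ≤ div f + S} =
      {f : Kˣ | 0 ≤ div f + S + Finsupp.single N (p : ℤ)} := by
  classical
  intro p
  ext f
  simp only [Set.mem_setOf_eq, Finsupp.le_def, Finsupp.coe_zero, Pi.zero_apply,
    Finsupp.add_apply]
  constructor
  · intro h i
    have := h i
    have : 0 ≤ div f i + S i := this
    have hp : (0:ℤ) ≤ Finsupp.single N (p:ℤ) i := by
      rw [Finsupp.single_apply]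
      split <;> simp
    linarith
  · intro h i
    rcases eq_or_ne i N with rfl | hne
    · have := hN f
      omega
    · have := h i
      rw [Finsupp.single_apply, if_neg fun h' => hne h'.symm] at this
      omega
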